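/- Let f(θ) = sin θ · ((3θ − π) cos θ − sin(3θ)) / (2(1 − sin θ)^4) for θ ∈ (−π/2, π/2). Then f(π/3) = 0 and f'(π/3) > 0. -/
import Mathlib


open Real

noncomputable def fTri : ℝ → ℝ := fun θ =>
  Real.sin θ * ((3 * θ - π) * Real.cos θ - Real.sin (3 * θ)) / (2 * (1 - Real.sin θ) ^ 4)

theorem stmt_7 : fTri (π / 3) = 0 ∧ 0 < deriv fTri (π / 3) := by
  have hs : Real.sin (π / 3) = Real.sqrt 3 / 2 := Real.sin_pi_div_three
  have hc : Real.cos (π / 3) = 1 / 2 := Real.cos_pi_div_three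
  have h3 : 3 * (π / 3) = π := by ring
  have hsqrt_nonneg : (0 : ℝ) ≤ Real.sqrt 3 := Real.sqrt_nonneg 3
  have hsqrt_sq : Real.sqrt 3 ^ 2 = 3 := Real.sq_sqrt (by norm_num)
  have hsqrt_lt : Real.sqrt 3 < 2 := by nlinarith
  have hsqrt_gt : (1 : ℝ) < Real.sqrt 3 := by nlinarith
  have hDpos : 0 < 2 * (1 - Real.sin (π / 3)) ^ 4 := by
    rw [hs]
    have h1 : (0 : ℝ) < 1 - Real.sqrt 3 / 2 := by nlinarith
    positivity
  have hzero : fTri (π / 3) = 0 := by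
    simp [fTri, h3, Real.sin_pi]
  refine ⟨hzero, ?_⟩
  -- derivative of g θ = (3θ - π) cos θ - sin (3θ)
  have hg : HasDerivAt (fun θ : ℝ => (3 * θ - π) * Real.cos θ - Real.sin (3 * θ))
      ((3 * 1) * Real.cos (π / 3) + (3 * (π / 3) - π) * (-Real.sin (π / 3))
        - Real.cos (3 * (π / 3)) * (3 * 1)) (π / 3) := by
    have h1 : HasDerivAt (fun θ : ℝ => (3 * θ - π) * Real.cos θ)
        ((3 * 1) * Real.cos (π / 3) + (3 * (π / 3) - π) * (-Real.sin (π / 3))) (π / 3) :=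
      (((hasDerivAt_id (π / 3)).const_mul 3).sub_const π).mul (Real.hasDerivAt_cos _)
    have h2 : HasDerivAt (fun θ : ℝ => Real.sin (3 * θ))
        (Real.cos (3 * (π / 3)) * (3 * 1)) (π / 3) :=
      (Real.hasDerivAt_sin _).comp _ ((hasDerivAt_id (π / 3)).const_mul 3)
    exact h1.sub h2
  -- numerator
  have hN : HasDerivAt
      (fun θ : ℝ => Real.sin θ * ((3 * θ - π) * Real.cos θ - Real.sin (3 * θ)))
      (Real.cos (π / 3) * ((3 * (π / 3) - π) * Real.cos (π / 3) - Real.sin (3 * (π / 3)))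
        + Real.sin (π / 3) * ((3 * 1) * Real.cos (π / 3)
          + (3 * (π / 3) - π) * (-Real.sin (π / 3)) - Real.cos (3 * (π / 3)) * (3 * 1)))
      (π / 3) :=
    (Real.hasDerivAt_sin _).mul hg
  -- denominator
  have hD : HasDerivAt (fun θ : ℝ => 2 * (1 - Real.sin θ) ^ 4)
      (2 * ((4 : ℕ) * (1 - Real.sin (π / 3)) ^ 3 * (0 - Real.cos (π / 3)))) (π / 3) :=
    (((hasDerivAt_const (π / 3) (1 : ℝ)).sub (Real.hasDerivAt_sin _)).pow 4).const_mul 2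
  have hf : HasDerivAt fTri
      (((Real.cos (π / 3) * ((3 * (π / 3) - π) * Real.cos (π / 3) - Real.sin (3 * (π / 3)))
        + Real.sin (π / 3) * ((3 * 1) * Real.cos (π / 3)
          + (3 * (π / 3) - π) * (-Real.sin (π / 3)) - Real.cos (3 * (π / 3)) * (3 * 1)))
        * (2 * (1 - Real.sin (π / 3)) ^ 4)
        - Real.sin (π / 3) * ((3 * (π / 3) - π) * Real.cos (π / 3) - Real.sin (3 * (π / 3)))
          * (2 * ((4 : ℕ) * (1 - Real.sin (π / 3)) ^ 3 * (0 - Real.cos (π / 3)))))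
        / (2 * (1 - Real.sin (π / 3)) ^ 4) ^ 2) (π / 3) :=
    hN.div hD (ne_of_gt hDpos)
  rw [hf.deriv]
  rw [h3, Real.sin_pi, Real.cos_pi, hs, hc]
  have h1 : (0 : ℝ) < 1 - Real.sqrt 3 / 2 := by nlinarith
  have hnum : (1 / 2 * ((π - π) * (1 / 2) - 0)
      + Real.sqrt 3 / 2 * (3 * 1 * (1 / 2) + (π - π) * -(Real.sqrt 3 / 2) - (-1) * (3 * 1)))
      * (2 * (1 - Real.sqrt 3 / 2) ^ 4)
      - Real.sqrt 3 / 2 * ((π - π) * (1 / 2) - 0)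
        * (2 * ((4 : ℕ) * (1 - Real.sqrt 3 / 2) ^ 3 * (0 - 1 / 2)))
      = Real.sqrt 3 / 2 * (9 / 2) * (2 * (1 - Real.sqrt 3 / 2) ^ 4) := by
    push_cast; ring
  rw [hnum]
  positivity
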